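/- Let φ: A → L[τ] be a Drinfeld module of rank n, and fix u ∈ L̄((τ^{-1}))^× with u^{-1}·φ(F_∞)·u ⊆ k̄((τ^{-1})). Then: (i) for every σ ∈ W_L the series σ(u)·τ^{deg(σ)}·u^{-1} (σ acting on the coefficients of u, which lie in L^sep) belongs to D_φ^× and does not depend on the choice of u; (ii) defining ρ_∞(σ) := σ(u)·τ^{deg(σ)}·u^{-1}, one has ord_{τ^{-1}}(ρ_∞(σ)) = −deg(σ); (iii) ρ_∞: W_L → D_φ^× is a continuous group homomorphism; (iv) ρ_∞(W_L) commutes with End_L(φ). -/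

import Mathlib

/-!
Axiomatic framework for the Sato–Tate setting of Drinfeld modules (D. Zywina,
"The Sato-Tate Law for Drinfeld Modules").

We fix a finite field `k` with `q` elements, a global function field `F` with field of
constants `k`, a place `∞` of `F` with completion `Finf` (valuation `ord_∞`, residue degree
`dinf`), the ring `A ⊆ F` of functions regular away from `∞`, a field extension `L` of `k`
with algebraic closure `Lbar`, and the twisted Laurent series skew field `R = L̄((τ⁻¹))`
(with commutation rule `τ·a = a^q·τ`), which is axiomatized via its coefficient functionals.
A Drinfeld module of rank `n` is a ring homomorphism `φ : A → L[τ] ⊆ R`, together with its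
canonical extension `phiinf : Finf → R` satisfying `ord_{τ⁻¹}(phiinf x) = n·dinf·ord_∞(x)`.
-/

noncomputable section
open scoped Classical

namespace SatoTate

/-- An additive `ℤ ∪ {+∞}`-valued valuation on a division ring; e.g. the normalized
valuation `ord_∞` on `F_∞`, or `ord_{τ⁻¹}` on `L̄((τ⁻¹))`. -/
structure IsAddVal {K : Type*} [DivisionRing K] (v : K → WithTop ℤ) : Prop where
  top_iff : ∀ x, v x = ⊤ ↔ x = 0
  map_mul : ∀ x y, v (x * y) = v x + v y
  min_le : ∀ x y, min (v x) (v y) ≤ v (x + y)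

/-- `v` is a (normalized) place of `F`, trivial on the field of constants `k`. -/
def IsPlaceOver (k : Type*) {F : Type*} [Field k] [Field F] [Algebra k F]
    (v : F → WithTop ℤ) : Prop :=
  IsAddVal v ∧ (∀ c : k, c ≠ 0 → v (algebraMap k F c) = 0) ∧ ∃ x, v x = 1

/-- `L` is a finitely generated field (equivalently, finitely generated over the
prime field `k`). -/
def FinGenField (k L : Type*) [Field k] [Field L] [Algebra k L] : Prop :=
  ∃ s : Finset L, IntermediateField.adjoin k (s : Set L) = ⊤

/-- The ambient setting: `k`, `F`, `∞`, `Finf`, `A`, `L`, `L̄`, the twisted Laurent series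
skew field `R = L̄((τ⁻¹))`, and a Drinfeld module `φ : A → L[τ]` of rank `n`. -/
structure Ctx (q n dinf : ℕ) (k F Finf L Lbar R : Type)
    [Field k] [Fintype k] [Field F] [Algebra k F]
    [Field Finf] [Algebra k Finf] [Algebra F Finf] [IsScalarTower k F Finf]
    [Field L] [Algebra k L]
    [Field Lbar] [Algebra k Lbar] [Algebra L Lbar] [IsScalarTower k L Lbar]
    [DivisionRing R] : Type 1 where
  /-- `k` is the finite field with `q` elements. -/
  card_k : Fintype.card k = q
  one_lt_q : 1 < q
  n_pos : 0 < n
  dinf_pos : 0 < dinf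
  /-- `L̄` is an algebraic closure of `L`. -/
  algClosure : IsAlgClosure L Lbar
  /-- `k` is the field of constants of `F`. -/
  constants : ∀ x : F, IsAlgebraic k x → x ∈ (algebraMap k F).range
  /-- `F` is a function field in one variable over `k`. -/
  function_field : ∃ t : F, Transcendental k t ∧
    FiniteDimensional (IntermediateField.adjoin k ({t} : Set F)) F
  /-- The valuation `ord_∞` on the completion `Finf` of `F` at `∞`. -/
  vinf : Finf → WithTop ℤ
  vinf_val : IsAddVal vinf
  vinf_const : ∀ c : k, c ≠ 0 → vinf (algebraMap k Finf c) = 0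
  vinf_one : ∃ x : Finf, vinf x = 1
  /-- restricted to `F`, `ord_∞` is a place of `F`. -/
  vinf_place : IsPlaceOver k fun y : F => vinf (algebraMap F Finf y)
  /-- `Finf` is complete. -/
  complete : ∀ s : ℕ → Finf,
    (∀ m : ℤ, ∃ N, ∀ i ≥ N, ∀ j ≥ N, (m : WithTop ℤ) ≤ vinf (s i - s j)) →
    ∃ l, ∀ m : ℤ, ∃ N, ∀ i ≥ N, (m : WithTop ℤ) ≤ vinf (s i - l)
  /-- `F` is dense in `Finf`. -/
  dense : ∀ x : Finf, ∀ m : ℤ, ∃ y : F, (m : WithTop ℤ) ≤ vinf (x - algebraMap F Finf y)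
  /-- The residue field `𝔽_∞` of `∞` has degree `dinf` over `k`: the valuation ring of
  `ord_∞` has exactly `q ^ (dinf * m)` distinct balls of radius `m`. -/
  residue : ∀ m : ℕ, 0 < m → Nat.card
    {s : Set Finf // ∃ x, 0 ≤ vinf x ∧ s = {y | 0 ≤ vinf y ∧ (m : WithTop ℤ) ≤ vinf (y - x)}}
      = q ^ (dinf * m)
  /-- the inclusion of constants `L̄ → L̄((τ⁻¹))`. -/
  cst : Lbar →+* R
  /-- the twist `τ` (the `q`-power Frobenius). -/
  τ : R
  /-- the commutation rule `τ · a = a^q · τ`. -/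
  τ_comm : ∀ a : Lbar, τ * cst a = cst (a ^ q) * τ
  /-- `coeff f i` is the coefficient of `τ⁻ⁱ` in `f = ∑ᵢ (coeff f i)·τ⁻ⁱ`. -/
  coeff : R → ℤ → Lbar
  coeff_add : ∀ f g i, coeff (f + g) i = coeff f i + coeff g i
  coeff_injective : ∀ f g : R, (∀ i, coeff f i = coeff g i) → f = g
  coeff_bddBelow : ∀ f : R, ∃ N : ℤ, ∀ i < N, coeff f i = 0
  coeff_surjective : ∀ c : ℤ → Lbar, (∃ N : ℤ, ∀ i < N, c i = 0) →
    ∃ f : R, ∀ i, coeff f i = c i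
  coeff_monomial : ∀ (a : Lbar) (m i : ℤ), coeff (cst a * τ ^ m) i = if i = -m then a else 0
  /-- the valuation `ord_{τ⁻¹}` on `R`. -/
  w : R → WithTop ℤ
  w_val : IsAddVal w
  w_coeff : ∀ (f : R) (i : ℤ), (i : WithTop ℤ) ≤ w f ↔ ∀ j < i, coeff f j = 0
  /-- the coefficientwise action of `Gal(L̄/L)` on `R = L̄((τ⁻¹))`. -/
  galAct : (Lbar ≃ₐ[L] Lbar) → R →+* R
  galAct_coeff : ∀ (σ : Lbar ≃ₐ[L] Lbar) (f : R) (i : ℤ),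
    coeff (galAct σ f) i = σ (coeff f i)
  /-- `A ⊆ F` is the ring of functions regular away from `∞`. -/
  A : Subring F
  A_spec : ∀ x : F, x ∈ A ↔ ∀ v : F → WithTop ℤ, IsPlaceOver k v →
    v ≠ (fun y : F => vinf (algebraMap F Finf y)) → 0 ≤ v x
  /-- the Drinfeld module `φ : A → L[τ] ⊆ L̄((τ⁻¹))`. -/
  φ : ↥A →+* R
  /-- the coefficients of each `φ_a` lie in `L`. -/
  φ_coeff_L : ∀ (a : ↥A) (i : ℤ), coeff (φ a) i ∈ (algebraMap L Lbar).range
  /-- each `φ_a` is a twisted polynomial in `τ`. -/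
  φ_poly : ∀ (a : ↥A) (i : ℤ), 0 < i → coeff (φ a) i = 0
  /-- `φ(A)` is not contained in the constants. -/
  φ_nonconst : ∃ (a : ↥A) (i : ℤ), i ≠ 0 ∧ coeff (φ a) i ≠ 0
  /-- the canonical extension of `φ` to `Finf`. -/
  phiinf : Finf →+* R
  phiinf_extends : ∀ a : ↥A, phiinf (algebraMap F Finf (a : F)) = φ a
  /-- `φ` has rank `n`: `ord_{τ⁻¹}(φ_x) = n·dinf·ord_∞(x)`. -/
  rank : ∀ x : Finf, w (phiinf x) = (n * dinf) • vinf x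
  /-- `cpoly f = det(T·1 − f)` is the reduced characteristic polynomial of `f ∈ D_φ`
  over `Finf`: the monic polynomial of degree `n` that is a power of the minimal
  polynomial of `f` over `Finf`. -/
  cpoly : R → Polynomial Finf
  cpoly_spec : ∀ f : R, (∀ a : ↥A, f * φ a = φ a * f) →
    (cpoly f).Monic ∧ (cpoly f).natDegree = n ∧
    (∑ i ∈ Finset.range (n + 1), phiinf ((cpoly f).coeff i) * f ^ i = 0) ∧
    ∃ (g : Polynomial Finf) (m : ℕ), g.Monic ∧ Irreducible g ∧
      (∑ i ∈ Finset.range (g.natDegree + 1), phiinf (g.coeff i) * f ^ i = 0) ∧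
      cpoly f = g ^ m

/-- The units of the centralizer of a subset `s ⊆ R`, as a subgroup of `Rˣ`. -/
def unitsCentralizer {R : Type*} [Ring R] (s : Set R) : Subgroup Rˣ where
  carrier := {y : Rˣ | (y : R) ∈ Subring.centralizer s}
  one_mem' := by
    show ((1 : Rˣ) : R) ∈ Subring.centralizer s
    rw [Units.val_one]; exact Subring.one_mem _
  mul_mem' := by
    intro a b ha hb
    show ((a * b : Rˣ) : R) ∈ Subring.centralizer s
    rw [Units.val_mul]; exact Subring.mul_mem _ ha hb
  inv_mem' := by
    intro y hy
    rw [Set.mem_setOf_eq, Subring.mem_centralizer_iff] at hy ⊢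
    intro g hg
    have h := hy g hg
    have h2 : (y : R) * (g * (↑y⁻¹ : R)) = g := by
      rw [← mul_assoc, ← h, mul_assoc, Units.mul_inv, mul_one]
    calc g * (↑y⁻¹ : R) = ↑y⁻¹ * ((y : R) * (g * ↑y⁻¹)) := by
          rw [← mul_assoc, Units.inv_mul, one_mul]
      _ = ↑y⁻¹ * g := by rw [h2]

namespace Ctx

variable {q n dinf : ℕ} {k F Finf L Lbar R : Type}
  [Field k] [Fintype k] [Field F] [Algebra k F]
  [Field Finf] [Algebra k Finf] [Algebra F Finf] [IsScalarTower k F Finf]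
  [Field L] [Algebra k L]
  [Field Lbar] [Algebra k Lbar] [Algebra L Lbar] [IsScalarTower k L Lbar]
  [DivisionRing R]

variable (C : Ctx q n dinf k F Finf L Lbar R)

/-- `D_φ`: the centralizer of `φ(A)` in `R = L̄((τ⁻¹))`; a central `Finf`-division
algebra with invariant `−1/n`. -/
def D : Subring R := Subring.centralizer (Set.range fun a : ↥C.A => C.φ a)

/-- membership in the twisted polynomial ring `L[τ] ⊆ R`. -/
def MemLtau (f : R) : Prop :=
  (∀ i : ℤ, 0 < i → C.coeff f i = 0) ∧ ∀ i : ℤ, C.coeff f i ∈ (algebraMap L Lbar).range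

/-- membership in the twisted polynomial ring `L̄[τ] ⊆ R`. -/
def MemLbartau (f : R) : Prop := ∀ i : ℤ, 0 < i → C.coeff f i = 0

/-- the endomorphism ring `End_L(φ)`: the centralizer of `φ(A)` in `L[τ]`. -/
def EndL : Set R := {f | C.MemLtau f ∧ ∀ a : ↥C.A, f * C.φ a = C.φ a * f}

/-- the endomorphism ring `End_{L̄}(φ)`: the centralizer of `φ(A)` in `L̄[τ]`. -/
def EndLbar : Set R := {f | C.MemLbartau f ∧ ∀ a : ↥C.A, f * C.φ a = C.φ a * f}

/-- `B_φ`: the centralizer of `End_{L̄}(φ)` in `R = L̄((τ⁻¹))`. -/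
def B : Subring R := Subring.centralizer C.EndLbar

/-- `σ ∈ Gal(L̄/L)` belongs to the Weil group `W_L` with `deg σ = d`: the restriction of
`σ` to the algebraic closure `k̄` of `k` in `L̄` is the `d`-th power of `x ↦ x^q`. -/
def WeilCond (_C : Ctx q n dinf k F Finf L Lbar R) (σ : Lbar ≃ₐ[L] Lbar) (d : ℤ) : Prop :=
  ∀ x : Lbar, IsAlgebraic k x → σ x ^ q ^ (-d).toNat = x ^ q ^ d.toNat

/-- `u ∈ L̄((τ⁻¹))^×` has coefficients in `L^sep` and satisfies
`u⁻¹ · φ(A) · u ⊆ k̄((τ⁻¹))`. -/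
def UGood (u : R) : Prop :=
  u ≠ 0 ∧ (∀ i : ℤ, C.coeff u i ∈ separableClosure L Lbar) ∧
    ∀ (a : ↥C.A) (i : ℤ), IsAlgebraic k (C.coeff (u⁻¹ * C.φ a * u) i)

/-- `u ∈ L̄((τ⁻¹))^×` satisfies `u⁻¹ · φ(Finf) · u ⊆ k̄((τ⁻¹))`. -/
def UGoodInf (u : R) : Prop :=
  u ≠ 0 ∧ ∀ (x : Finf) (i : ℤ), IsAlgebraic k (C.coeff (u⁻¹ * C.phiinf x * u) i)

/-- the Sato–Tate representation: `ρ_∞(σ) = σ(u) · τ^{deg σ} · u⁻¹`. -/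
def rho (σ : Lbar ≃ₐ[L] Lbar) (d : ℤ) (u : R) : R := C.galAct σ u * C.τ ^ d * u⁻¹

/-- the image `ρ_∞(W_L) ⊆ D_φ^×`, as a subset of `R`. -/
def rhoSet : Set R :=
  {r | ∃ (σ : Lbar ≃ₐ[L] Lbar) (d : ℤ) (u : R), C.WeilCond σ d ∧ C.UGood u ∧ r = C.rho σ d u}

/-- `D_φ^×`, as a subgroup of `Rˣ`. -/
def DUnits : Subgroup Rˣ := unitsCentralizer (Set.range fun a : ↥C.A => C.φ a)

/-- `B_φ^×`, as a subgroup of `Rˣ`. -/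
def BUnits : Subgroup Rˣ := unitsCentralizer C.EndLbar

/-- `H` contains a neighbourhood of `1` in `K` for the `∞`-adic (i.e. `ord_{τ⁻¹}`-adic)
topology; together with `H ≤ K` this says that `H` is an open subgroup of `K`. -/
def OpenIn (K H : Subgroup Rˣ) : Prop :=
  ∃ m : ℤ, ∀ y : Rˣ, y ∈ K → (m : WithTop ℤ) ≤ C.w ((y : R) - 1) → y ∈ H

/-- `φ` has generic characteristic: `∂ ∘ φ : A → L` is injective. -/
def GenericChar : Prop := ∀ a : ↥C.A, C.coeff (C.φ a) 0 = 0 → a = 0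

/-- `End_{L̄}(φ) = φ(A)`: no extra endomorphisms. -/
def NoExtraEnd : Prop := ∀ f ∈ C.EndLbar, ∃ a : ↥C.A, f = C.φ a

/-- the image of `End_L(φ) ⊗_A Finf` in `D_φ`. -/
def endSpan : Set R :=
  {f | ∃ (m : ℕ) (e : Fin m → R) (z : Fin m → Finf),
    (∀ i, e i ∈ C.EndL) ∧ f = ∑ i, e i * C.phiinf (z i)}

/-- the reduced trace `tr : D_φ → Finf` (read off from the reduced characteristic
polynomial). -/
def Trd (f : R) : Finf := -((C.cpoly f).coeff (n - 1))

/-- the reduced norm `det : D_φ → Finf` (read off from the reduced characteristic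
polynomial). -/
def Nrd (f : R) : Finf := (-1) ^ n * (C.cpoly f).coeff 0


/-! ### Auxiliary lemmas -/
set_option linter.unusedSectionVars false

section AuxBasic

lemma coeff_zero' (i : ℤ) : C.coeff 0 i = 0 := by
  have h := C.coeff_add 0 0 i
  rw [add_zero] at h
  exact add_eq_right.mp h.symm

/-- `coeff · i` as an additive monoid hom. -/
def coeffHom (i : ℤ) : R →+ Lbar where
  toFun f := C.coeff f i
  map_zero' := C.coeff_zero' i
  map_add' f g := C.coeff_add f g i

lemma coeff_sub (f g : R) (i : ℤ) : C.coeff (f - g) i = C.coeff f i - C.coeff g i :=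
  map_sub (C.coeffHom i) f g

lemma coeff_sum {α : Type*} (s : Finset α) (F : α → R) (i : ℤ) :
    C.coeff (∑ x ∈ s, F x) i = ∑ x ∈ s, C.coeff (F x) i :=
  map_sum (C.coeffHom i) F s

lemma lt_iff_add_one_le {i : ℤ} {b : WithTop ℤ} :
    (i : WithTop ℤ) < b ↔ ((i + 1 : ℤ) : WithTop ℤ) ≤ b := by
  cases b with
  | top => simp
  | coe c =>
    rw [WithTop.coe_lt_coe, WithTop.coe_le_coe]; omega

lemma coeff_eq_zero_of_lt_w {f : R} {i : ℤ} (h : (i : WithTop ℤ) < C.w f) :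
    C.coeff f i = 0 := by
  have h2 := (C.w_coeff f (i + 1)).mp (lt_iff_add_one_le.mp h)
  exact h2 i (by omega)

lemma w_le_of_coeff_ne {f : R} {i : ℤ} (h : C.coeff f i ≠ 0) : C.w f ≤ (i : WithTop ℤ) := by
  by_contra hc
  exact h (C.coeff_eq_zero_of_lt_w (not_le.mp hc))

lemma w_eq_coe {f : R} {c : ℤ} (h0 : ∀ j < c, C.coeff f j = 0) (h1 : C.coeff f c ≠ 0) :
    C.w f = (c : WithTop ℤ) :=
  le_antisymm (C.w_le_of_coeff_ne h1) ((C.w_coeff f c).mpr h0)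

lemma lead_ne_zero {f : R} {c : ℤ} (h : C.w f = (c : WithTop ℤ)) : C.coeff f c ≠ 0 := by
  intro h0
  have h2 : ((c + 1 : ℤ) : WithTop ℤ) ≤ C.w f := (C.w_coeff f (c + 1)).mpr (by
    intro j hj
    rcases lt_or_eq_of_le (by omega : j ≤ c) with h'|h'
    · exact C.coeff_eq_zero_of_lt_w (by rw [h]; exact_mod_cast h')
    · rw [h']; exact h0)
  rw [h, WithTop.coe_le_coe] at h2
  omega

lemma exists_w_int {f : R} (hf : f ≠ 0) : ∃ c : ℤ, C.w f = (c : WithTop ℤ) := by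
  cases hw : C.w f with
  | top => exact absurd ((C.w_val.top_iff f).mp hw) hf
  | coe c => exact ⟨c, rfl⟩

lemma coeff_tau_zpow (d i : ℤ) : C.coeff (C.τ ^ d) i = if i = -d then 1 else 0 := by
  have h := C.coeff_monomial 1 d i
  rwa [map_one, one_mul] at h

lemma tau_ne_zero : C.τ ≠ 0 := by
  intro h
  have h1 := C.coeff_tau_zpow 1 (-1)
  rw [if_pos rfl, zpow_one, h, C.coeff_zero'] at h1
  exact one_ne_zero h1.symm

lemma w_tau_zpow (d : ℤ) : C.w (C.τ ^ d) = ((-d : ℤ) : WithTop ℤ) :=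
  C.w_eq_coe (fun j hj => by rw [C.coeff_tau_zpow, if_neg (by omega)])
    (by rw [C.coeff_tau_zpow, if_pos rfl]; exact one_ne_zero)

lemma w_one' : C.w 1 = ((0 : ℤ) : WithTop ℤ) := by
  have := C.w_tau_zpow 0
  rwa [zpow_zero, neg_zero] at this

lemma w_mul_coe {f g : R} {a b : ℤ} (hf : C.w f = (a : WithTop ℤ)) (hg : C.w g = (b : WithTop ℤ)) :
    C.w (f * g) = ((a + b : ℤ) : WithTop ℤ) := by
  rw [C.w_val.map_mul, hf, hg]
  exact (WithTop.coe_add a b).symm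

lemma w_ne_zero_of_coe {f : R} {a : ℤ} (hf : C.w f = (a : WithTop ℤ)) : f ≠ 0 := by
  intro h
  rw [h, (C.w_val.top_iff 0).mpr rfl] at hf
  exact (WithTop.coe_ne_top (a := a)) hf.symm

lemma w_inv_coe {f : R} {a : ℤ} (hf : C.w f = (a : WithTop ℤ)) :
    C.w f⁻¹ = ((-a : ℤ) : WithTop ℤ) := by
  have hf0 : f ≠ 0 := C.w_ne_zero_of_coe hf
  obtain ⟨c, hc⟩ := C.exists_w_int (inv_ne_zero hf0)
  have h2 : C.w (f⁻¹ * f) = ((c + a : ℤ) : WithTop ℤ) := C.w_mul_coe hc hf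
  rw [inv_mul_cancel₀ hf0, C.w_one'] at h2
  have h3 : (0 : ℤ) = c + a := WithTop.coe_inj.mp h2
  rw [hc]
  congr 1
  omega

end AuxBasic


section AuxChar

variable (p e : ℕ) [ExpChar Lbar p] [PerfectRing Lbar p]

/-- the `q`-power Frobenius `x ↦ x^q` on `L̄` (`q = p^e`), as a ring automorphism. -/
def qf : Lbar ≃+* Lbar := iterateFrobeniusEquiv Lbar p e

/-- integral powers of the `q`-power Frobenius on `L̄`. -/
def qz (d : ℤ) : Lbar ≃+* Lbar := qf p e ^ d

lemma qf_apply (hq : q = p ^ e) (x : Lbar) : qf p e x = x ^ q := by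
  rw [hq]; rfl

lemma qz_mul_apply (d d' : ℤ) (x : Lbar) : qz p e d (qz p e d' x) = qz p e (d + d') x := by
  rw [qz, qz, qz, zpow_add]
  rfl

lemma qz_coe_nat_apply (hq : q = p ^ e) (m : ℕ) (x : Lbar) :
    qz p e (m : ℤ) x = x ^ q ^ m := by
  rw [qz, zpow_natCast]
  induction m generalizing x with
  | zero => simp only [pow_zero, pow_one]; rfl
  | succ t ih =>
    rw [pow_succ]
    show (qf p e ^ t) (qf p e x) = x ^ q ^ (t + 1)
    rw [ih (qf p e x), qf_apply p e hq, ← pow_mul, ← pow_succ']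

lemma qz_pow_q (hq : q = p ^ e) (d : ℤ) (m : ℕ) (x : Lbar) :
    (qz p e d x) ^ q ^ m = qz p e ((m : ℤ) + d) x := by
  rw [← qz_coe_nat_apply p e hq m, qz_mul_apply]

lemma qz_one_apply (hq : q = p ^ e) (x : Lbar) : qz p e 1 x = x ^ q := by
  have := qz_coe_nat_apply p e hq 1 x
  rw [pow_one] at this
  exact_mod_cast this

lemma pow_q_injective (hp : p.Prime) (hq : q = p ^ e) (m : ℕ) {x y : Lbar}
    (h : x ^ q ^ m = y ^ q ^ m) : x = y := by
  have hqm : q ^ m = p ^ (e * m) := by rw [hq, ← pow_mul]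
  rw [hqm] at h
  have hc : (x - y) ^ p ^ (e * m) = 0 := by
    rw [sub_pow_expChar_pow, h, sub_self]
  exact sub_eq_zero.mp (pow_eq_zero_iff (pow_pos hp.pos (e * m)).ne' |>.mp hc)

lemma mem_kbar_iff {x : Lbar} : x ∈ integralClosure k Lbar ↔ IsAlgebraic k x := by
  rw [mem_integralClosure_iff, isAlgebraic_iff_isIntegral]

lemma kbar_inv_mem {x : Lbar} (hx : x ∈ integralClosure k Lbar) :
    x⁻¹ ∈ integralClosure k Lbar := by
  rw [mem_integralClosure_iff] at hx ⊢
  exact hx.inv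

lemma kbar_root_mem {x b d : Lbar} {Q : ℕ} (hQ : 1 < Q)
    (hb : b ∈ integralClosure k Lbar) (hd : d ∈ integralClosure k Lbar)
    (h : x ^ Q = b * x + d) : x ∈ integralClosure k Lbar := by
  rw [mem_integralClosure_iff]
  have hx : IsIntegral (integralClosure k Lbar) x := by
    refine ⟨Polynomial.X ^ Q - (Polynomial.C (⟨b, hb⟩ : integralClosure k Lbar) * Polynomial.X +
      Polynomial.C (⟨d, hd⟩ : integralClosure k Lbar)), ?_, ?_⟩
    · exact Polynomial.monic_X_pow_sub
        (lt_of_le_of_lt Polynomial.degree_linear_le (by exact_mod_cast hQ))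
    · simp only [Polynomial.eval₂_sub, Polynomial.eval₂_pow, Polynomial.eval₂_X,
        Polynomial.eval₂_add, Polynomial.eval₂_mul, Polynomial.eval₂_C]
      have hb' : algebraMap (integralClosure k Lbar) Lbar ⟨b, hb⟩ = b := rfl
      have hd' : algebraMap (integralClosure k Lbar) Lbar ⟨d, hd⟩ = d := rfl
      rw [hb', hd', h]
      ring
  exact isIntegral_trans x hx

lemma kbar_qz_mem (hq : q = p ^ e) (hq1 : 1 < q) (d : ℤ) {x : Lbar}
    (hx : x ∈ integralClosure k Lbar) : qz p e d x ∈ integralClosure k Lbar := by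
  rcases le_or_gt 0 d with hd|hd
  · lift d to ℕ using hd
    rw [qz_coe_nat_apply p e hq]
    exact pow_mem hx _
  · set y := qz p e d x with hy0
    have hy : y ^ q ^ (-d).toNat = x ^ q ^ d.toNat := by
      rw [hy0, qz_pow_q p e hq]
      have h1 : (((-d).toNat : ℤ)) + d = ((d.toNat : ℤ)) := by omega
      rw [h1, qz_coe_nat_apply p e hq]
    have h0 : d.toNat = 0 := by omega
    rw [h0, pow_zero, pow_one] at hy
    refine kbar_root_mem (Q := q ^ (-d).toNat) ?_ (zero_mem _) hx ?_
    · exact Nat.one_lt_pow (by omega) hq1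
    · rw [hy, zero_mul, zero_add]

end AuxChar


section AuxTrunc

variable (p e : ℕ) [ExpChar Lbar p] [PerfectRing Lbar p]

/-- truncation of `f` to the coefficients in `s`. -/
def tr (f : R) (s : Finset ℤ) : R := ∑ j ∈ s, C.cst (C.coeff f j) * C.τ ^ (-j)

lemma coeff_tr (f : R) (s : Finset ℤ) (i : ℤ) :
    C.coeff (C.tr f s) i = if i ∈ s then C.coeff f i else 0 := by
  rw [tr, C.coeff_sum]
  have h1 : ∀ j ∈ s, C.coeff (C.cst (C.coeff f j) * C.τ ^ (-j)) i
      = if i = j then C.coeff f j else 0 := by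
    intro j _
    rw [C.coeff_monomial]
    exact if_congr (by omega) rfl rfl
  rw [Finset.sum_congr rfl h1, Finset.sum_ite_eq s i (fun j => C.coeff f j)]

lemma w_tr_Icc_ge (f : R) (c M : ℤ) : (c : WithTop ℤ) ≤ C.w (C.tr f (Finset.Icc c M)) :=
  (C.w_coeff _ c).mpr (fun j hj => by
    rw [C.coeff_tr, if_neg (by simp only [Finset.mem_Icc]; omega)])

lemma w_sub_tr (f : R) {c : ℤ} (hc : C.w f = (c : WithTop ℤ)) (M : ℤ) :
    ((M + 1 : ℤ) : WithTop ℤ) ≤ C.w (f - C.tr f (Finset.Icc c M)) :=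
  (C.w_coeff _ _).mpr (fun j hj => by
    rw [C.coeff_sub, C.coeff_tr]
    by_cases h : j ∈ Finset.Icc c M
    · rw [if_pos h, sub_self]
    · rw [if_neg h, sub_zero]
      refine C.coeff_eq_zero_of_lt_w ?_
      rw [hc]
      exact_mod_cast (by simp only [Finset.mem_Icc] at h; omega : j < c))

lemma qz_zero_apply (x : Lbar) : qz p e 0 x = x := by
  rw [qz, zpow_zero]; rfl

lemma qz_q_pow_one (hq : q = p ^ e) (d : ℤ) (x : Lbar) :
    (qz p e d x) ^ q = qz p e (1 + d) x := by
  have h := qz_pow_q p e hq d 1 x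
  rwa [pow_one, Nat.cast_one] at h

lemma tau_inv_cst (hq : q = p ^ e) (a : Lbar) :
    C.τ⁻¹ * C.cst a = C.cst (qz p e (-1) a) * C.τ⁻¹ := by
  have h1 : C.τ * C.cst (qz p e (-1) a) = C.cst a * C.τ := by
    rw [C.τ_comm]
    have h2 : (qz p e (-1) a) ^ q = a := by
      rw [qz_q_pow_one p e hq]
      norm_num
      exact qz_zero_apply p e a
    rw [h2]
  calc C.τ⁻¹ * C.cst a
      = C.τ⁻¹ * ((C.cst a * C.τ) * C.τ⁻¹) := by
        rw [mul_assoc (C.cst a), mul_inv_cancel₀ C.tau_ne_zero, mul_one]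
    _ = C.τ⁻¹ * (C.τ * C.cst (qz p e (-1) a) * C.τ⁻¹) := by rw [h1]
    _ = C.cst (qz p e (-1) a) * C.τ⁻¹ := by
        rw [← mul_assoc, ← mul_assoc, inv_mul_cancel₀ C.tau_ne_zero, one_mul]

lemma tau_zpow_cst (hq : q = p ^ e) (d : ℤ) (a : Lbar) :
    C.τ ^ d * C.cst a = C.cst (qz p e d a) * C.τ ^ d := by
  induction d using Int.induction_on with
  | zero => rw [zpow_zero, one_mul, mul_one, qz_zero_apply]
  | succ i ih =>
    have hstep : C.τ ^ ((i : ℤ) + 1) = C.τ * C.τ ^ (i : ℤ) := by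
      rw [add_comm, zpow_add₀ C.tau_ne_zero, zpow_one]
    rw [hstep, mul_assoc, ih, ← mul_assoc, C.τ_comm, qz_q_pow_one p e hq, mul_assoc,
      add_comm (1 : ℤ)]
  | pred i ih =>
    have hstep : C.τ ^ (-(i : ℤ) - 1) = C.τ⁻¹ * C.τ ^ (-(i : ℤ)) := by
      rw [sub_eq_add_neg, add_comm, zpow_add₀ C.tau_ne_zero, zpow_neg_one]
    rw [hstep, mul_assoc, ih, ← mul_assoc, C.tau_inv_cst p e hq, mul_assoc, qz_mul_apply]
    have harith : (-1 : ℤ) + -(i : ℤ) = -(i : ℤ) - 1 := by ring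
    rw [harith]

lemma monomial_mul (hq : q = p ^ e) (a b : Lbar) (s t : ℤ) :
    (C.cst a * C.τ ^ s) * (C.cst b * C.τ ^ t) = C.cst (a * qz p e s b) * C.τ ^ (s + t) := by
  rw [mul_assoc, ← mul_assoc (C.τ ^ s), C.tau_zpow_cst p e hq, mul_assoc,
    ← zpow_add₀ C.tau_ne_zero, ← mul_assoc, ← map_mul]

lemma coeff_mul_tau_zpow (f : R) (d i : ℤ) :
    C.coeff (f * C.τ ^ d) i = C.coeff f (i + d) := by
  by_cases hf : f = 0
  · rw [hf, zero_mul, C.coeff_zero', C.coeff_zero']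
  obtain ⟨c, hc⟩ := C.exists_w_int hf
  set s : Finset ℤ := Finset.Icc c (i + d) with hs
  set t := C.tr f s with ht
  have hdecomp : f * C.τ ^ d = t * C.τ ^ d + (f - t) * C.τ ^ d := by
    rw [← add_mul]
    congr 1
    abel
  rw [hdecomp, C.coeff_add]
  have h2 : C.coeff ((f - t) * C.τ ^ d) i = 0 := by
    apply C.coeff_eq_zero_of_lt_w
    rw [C.w_val.map_mul, C.w_tau_zpow]
    have h3 := C.w_sub_tr f hc (i + d)
    have h4 : ((i + d + 1 : ℤ) : WithTop ℤ) + ((-d : ℤ) : WithTop ℤ)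
        ≤ C.w (f - t) + ((-d : ℤ) : WithTop ℤ) := add_le_add_left h3 _
    rw [← WithTop.coe_add] at h4
    refine lt_of_lt_of_le ?_ h4
    exact_mod_cast (by omega : i < i + d + 1 + -d)
  rw [h2, add_zero, ht, tr, Finset.sum_mul, C.coeff_sum]
  have h5 : ∀ j ∈ s, C.coeff ((C.cst (C.coeff f j) * C.τ ^ (-j)) * C.τ ^ d) i
      = if i + d = j then C.coeff f j else 0 := by
    intro j _
    rw [mul_assoc, ← zpow_add₀ C.tau_ne_zero, C.coeff_monomial]
    exact if_congr (by omega) rfl rfl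
  rw [Finset.sum_congr rfl h5, Finset.sum_ite_eq s (i + d) (fun j => C.coeff f j)]
  by_cases h6 : i + d ∈ s
  · rw [if_pos h6]
  · rw [if_neg h6]
    refine (C.coeff_eq_zero_of_lt_w ?_).symm
    rw [hc]
    exact_mod_cast (by simp only [hs, Finset.mem_Icc] at h6; omega : i + d < c)

lemma coeff_tau_zpow_mul (hq : q = p ^ e) (f : R) (d i : ℤ) :
    C.coeff (C.τ ^ d * f) i = qz p e d (C.coeff f (i + d)) := by
  by_cases hf : f = 0
  · rw [hf, mul_zero, C.coeff_zero', C.coeff_zero', map_zero]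
  obtain ⟨c, hc⟩ := C.exists_w_int hf
  set s : Finset ℤ := Finset.Icc c (i + d) with hs
  set t := C.tr f s with ht
  have hdecomp : C.τ ^ d * f = C.τ ^ d * t + C.τ ^ d * (f - t) := by
    rw [← mul_add]
    congr 1
    abel
  rw [hdecomp, C.coeff_add]
  have h2 : C.coeff (C.τ ^ d * (f - t)) i = 0 := by
    apply C.coeff_eq_zero_of_lt_w
    rw [C.w_val.map_mul, C.w_tau_zpow]
    have h3 := C.w_sub_tr f hc (i + d)
    have h4 : ((-d : ℤ) : WithTop ℤ) + ((i + d + 1 : ℤ) : WithTop ℤ)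
        ≤ ((-d : ℤ) : WithTop ℤ) + C.w (f - t) := add_le_add_right h3 _
    rw [← WithTop.coe_add] at h4
    refine lt_of_lt_of_le ?_ h4
    exact_mod_cast (by omega : i < -d + (i + d + 1))
  rw [h2, add_zero, ht, tr, Finset.mul_sum, C.coeff_sum]
  have h5 : ∀ j ∈ s, C.coeff (C.τ ^ d * (C.cst (C.coeff f j) * C.τ ^ (-j))) i
      = if i + d = j then qz p e d (C.coeff f j) else 0 := by
    intro j _
    rw [← mul_assoc, C.tau_zpow_cst p e hq, mul_assoc, ← zpow_add₀ C.tau_ne_zero,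
      C.coeff_monomial]
    exact if_congr (by omega) rfl rfl
  rw [Finset.sum_congr rfl h5,
    Finset.sum_ite_eq s (i + d) (fun j => qz p e d (C.coeff f j))]
  by_cases h6 : i + d ∈ s
  · rw [if_pos h6]
  · rw [if_neg h6]
    have h7 : C.coeff f (i + d) = 0 := by
      refine C.coeff_eq_zero_of_lt_w ?_
      rw [hc]
      exact_mod_cast (by simp only [hs, Finset.mem_Icc] at h6; omega : i + d < c)
    rw [h7, map_zero]

end AuxTrunc


section AuxGal

lemma galAct_ne_zero (σ : Lbar ≃ₐ[L] Lbar) {f : R} (hf : f ≠ 0) : C.galAct σ f ≠ 0 := by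
  intro h
  apply hf
  apply C.coeff_injective f 0
  intro i
  have h1 := C.galAct_coeff σ f i
  rw [h, C.coeff_zero'] at h1
  rw [C.coeff_zero']
  exact σ.injective (by rw [← h1, map_zero])

lemma w_galAct (σ : Lbar ≃ₐ[L] Lbar) (f : R) : C.w (C.galAct σ f) = C.w f := by
  by_cases hf : f = 0
  · rw [hf, map_zero]
  obtain ⟨c, hc⟩ := C.exists_w_int hf
  rw [hc]
  refine C.w_eq_coe ?_ ?_
  · intro j hj
    rw [C.galAct_coeff, C.coeff_eq_zero_of_lt_w (by rw [hc]; exact_mod_cast hj), map_zero]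
  · rw [C.galAct_coeff]
    exact fun h => C.lead_ne_zero hc (σ.injective (by rw [h, map_zero]))

lemma galAct_comp (σ₁ σ₂ : Lbar ≃ₐ[L] Lbar) (f : R) :
    C.galAct (σ₁ * σ₂) f = C.galAct σ₁ (C.galAct σ₂ f) :=
  C.coeff_injective _ _ (fun i => by
    rw [C.galAct_coeff, C.galAct_coeff, C.galAct_coeff]; rfl)

lemma galAct_fixL (σ : Lbar ≃ₐ[L] Lbar) {f : R}
    (hf : ∀ i, C.coeff f i ∈ (algebraMap L Lbar).range) : C.galAct σ f = f :=
  C.coeff_injective _ _ (fun i => by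
    obtain ⟨c, hcc⟩ := hf i
    rw [C.galAct_coeff, ← hcc, σ.commutes])

lemma galAct_mem_kbar (σ : Lbar ≃ₐ[L] Lbar) {f : R}
    (hf : ∀ i, C.coeff f i ∈ integralClosure k Lbar) (i : ℤ) :
    C.coeff (C.galAct σ f) i ∈ integralClosure k Lbar := by
  rw [C.galAct_coeff, mem_kbar_iff]
  obtain ⟨P, hP0, hPx⟩ := (mem_kbar_iff).mp (hf i)
  refine ⟨P, hP0, ?_⟩
  have h1 := Polynomial.aeval_algHom_apply ((σ.restrictScalars k).toAlgHom) (C.coeff f i) P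
  rw [hPx, map_zero] at h1
  exact h1

lemma galAct_tau_zpow (σ : Lbar ≃ₐ[L] Lbar) (d : ℤ) : C.galAct σ (C.τ ^ d) = C.τ ^ d :=
  C.coeff_injective _ _ (fun i => by
    rw [C.galAct_coeff, C.coeff_tau_zpow]
    split_ifs
    · exact map_one σ
    · exact map_zero σ)

end AuxGal

section AuxMul

variable (p e : ℕ) [ExpChar Lbar p] [PerfectRing Lbar p]

lemma coeff_mul_mem (hq : q = p ^ e) (hq1 : 1 < q) {f g : R}
    (hf : ∀ j, C.coeff f j ∈ integralClosure k Lbar)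
    (hg : ∀ j, C.coeff g j ∈ integralClosure k Lbar) (i : ℤ) :
    C.coeff (f * g) i ∈ integralClosure k Lbar := by
  by_cases hf0 : f = 0
  · rw [hf0, zero_mul, C.coeff_zero']; exact zero_mem _
  by_cases hg0 : g = 0
  · rw [hg0, mul_zero, C.coeff_zero']; exact zero_mem _
  obtain ⟨cf, hcf⟩ := C.exists_w_int hf0
  obtain ⟨cg, hcg⟩ := C.exists_w_int hg0
  set f' := C.tr f (Finset.Icc cf (i - cg)) with hf'
  set g' := C.tr g (Finset.Icc cg (i - cf)) with hg'
  have hdecomp : f * g = f * (g - g') + (f - f') * g' + f' * g' := by noncomm_ring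
  rw [hdecomp, C.coeff_add, C.coeff_add]
  have h1 : C.coeff (f * (g - g')) i = 0 := by
    apply C.coeff_eq_zero_of_lt_w
    rw [C.w_val.map_mul]
    have h3 := C.w_sub_tr g hcg (i - cf)
    calc (i : WithTop ℤ) < ((cf + (i - cf + 1) : ℤ) : WithTop ℤ) := by
          exact_mod_cast (by omega : i < cf + (i - cf + 1))
      _ = ((cf : ℤ) : WithTop ℤ) + ((i - cf + 1 : ℤ) : WithTop ℤ) := WithTop.coe_add _ _
      _ ≤ C.w f + C.w (g - g') := add_le_add (le_of_eq hcf.symm) h3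
  have h2 : C.coeff ((f - f') * g') i = 0 := by
    apply C.coeff_eq_zero_of_lt_w
    rw [C.w_val.map_mul]
    have h3 := C.w_sub_tr f hcf (i - cg)
    have h4 := C.w_tr_Icc_ge g cg (i - cf)
    calc (i : WithTop ℤ) < (((i - cg + 1) + cg : ℤ) : WithTop ℤ) := by
          exact_mod_cast (by omega : i < (i - cg + 1) + cg)
      _ = ((i - cg + 1 : ℤ) : WithTop ℤ) + ((cg : ℤ) : WithTop ℤ) := WithTop.coe_add _ _
      _ ≤ C.w (f - f') + C.w g' := add_le_add h3 h4
  rw [h1, h2, zero_add, zero_add, hf', hg', tr, tr, Finset.sum_mul_sum, C.coeff_sum]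
  refine sum_mem (fun j hj => ?_)
  rw [C.coeff_sum]
  refine sum_mem (fun l hl => ?_)
  rw [C.monomial_mul p e hq, C.coeff_monomial]
  by_cases hcond : i = -(-j + -l)
  · rw [if_pos hcond]
    exact mul_mem (hf j) (kbar_qz_mem p e hq hq1 _ (hg l))
  · rw [if_neg hcond]; exact zero_mem _

lemma coeff_mul_lead (hq : q = p ^ e) {f g : R} {cf cg : ℤ}
    (hcf : C.w f = (cf : WithTop ℤ)) (hcg : C.w g = (cg : WithTop ℤ)) :
    C.coeff (f * g) (cf + cg) = C.coeff f cf * qz p e (-cf) (C.coeff g cg) := by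
  set i : ℤ := cf + cg with hi
  set f' := C.tr f (Finset.Icc cf (i - cg)) with hf'
  set g' := C.tr g (Finset.Icc cg (i - cf)) with hg'
  have hdecomp : f * g = f * (g - g') + (f - f') * g' + f' * g' := by noncomm_ring
  rw [hdecomp, C.coeff_add, C.coeff_add]
  have h1 : C.coeff (f * (g - g')) i = 0 := by
    apply C.coeff_eq_zero_of_lt_w
    rw [C.w_val.map_mul]
    have h3 := C.w_sub_tr g hcg (i - cf)
    calc (i : WithTop ℤ) < ((cf + (i - cf + 1) : ℤ) : WithTop ℤ) := by
          exact_mod_cast (by omega : i < cf + (i - cf + 1))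
      _ = ((cf : ℤ) : WithTop ℤ) + ((i - cf + 1 : ℤ) : WithTop ℤ) := WithTop.coe_add _ _
      _ ≤ C.w f + C.w (g - g') := add_le_add (le_of_eq hcf.symm) h3
  have h2 : C.coeff ((f - f') * g') i = 0 := by
    apply C.coeff_eq_zero_of_lt_w
    rw [C.w_val.map_mul]
    have h3 := C.w_sub_tr f hcf (i - cg)
    have h4 := C.w_tr_Icc_ge g cg (i - cf)
    calc (i : WithTop ℤ) < (((i - cg + 1) + cg : ℤ) : WithTop ℤ) := by
          exact_mod_cast (by omega : i < (i - cg + 1) + cg)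
      _ = ((i - cg + 1 : ℤ) : WithTop ℤ) + ((cg : ℤ) : WithTop ℤ) := WithTop.coe_add _ _
      _ ≤ C.w (f - f') + C.w g' := add_le_add h3 h4
  have hfs : f' = C.cst (C.coeff f cf) * C.τ ^ (-cf) := by
    rw [hf', show i - cg = cf from by omega, Finset.Icc_self, tr, Finset.sum_singleton]
  have hgs : g' = C.cst (C.coeff g cg) * C.τ ^ (-cg) := by
    rw [hg', show i - cf = cg from by omega, Finset.Icc_self, tr, Finset.sum_singleton]
  rw [h1, h2, zero_add, zero_add, hfs, hgs, C.monomial_mul p e hq, C.coeff_monomial,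
    if_pos (by omega : i = -(-cf + -cg))]

lemma claimA (hp : p.Prime) (hq : q = p ^ e) {σ : Lbar ≃ₐ[L] Lbar} {d : ℤ}
    (hσ : C.WeilCond σ d) {f : R} (hf : ∀ i, C.coeff f i ∈ integralClosure k Lbar) :
    C.galAct σ f * C.τ ^ d = C.τ ^ d * f := by
  apply C.coeff_injective
  intro i
  rw [C.coeff_mul_tau_zpow, C.coeff_tau_zpow_mul p e hq, C.galAct_coeff]
  set x := C.coeff f (i + d) with hx
  have hxalg : IsAlgebraic k x := (mem_kbar_iff).mp (hf (i + d))
  have h1 := hσ x hxalg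
  have h2 : (qz p e d x) ^ q ^ (-d).toNat = x ^ q ^ d.toNat := by
    rw [qz_pow_q p e hq, show (((-d).toNat : ℤ) + d) = ((d.toNat : ℤ)) from by omega,
      qz_coe_nat_apply p e hq]
  exact pow_q_injective p e hp hq _ (h1.trans h2.symm)

lemma conj_mem (hp : p.Prime) (hq : q = p ^ e) (hq1 : 1 < q) {g g' v : R} {m : ℤ} (hm : m < 0)
    (hwg : C.w g = (m : WithTop ℤ)) (hwg' : C.w g' = (m : WithTop ℤ))
    (hg : ∀ i, C.coeff g i ∈ integralClosure k Lbar)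
    (hg' : ∀ i, C.coeff g' i ∈ integralClosure k Lbar)
    (hv : v ≠ 0) (hrel : g * v = v * g') (i : ℤ) :
    C.coeff v i ∈ integralClosure k Lbar := by
  obtain ⟨c, hc⟩ := C.exists_w_int hv
  have key : ∀ j : ℕ, ∃ t : R, (∀ l, C.coeff t l ∈ integralClosure k Lbar) ∧
      ((c + (j : ℤ) : ℤ) : WithTop ℤ) ≤ C.w (v - t) := by
    intro j
    induction j with
    | zero =>
      refine ⟨0, fun l => by rw [C.coeff_zero']; exact zero_mem _, ?_⟩
      rw [sub_zero, hc]
      exact_mod_cast (by omega : c + ((0 : ℕ) : ℤ) ≤ c)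
    | succ j ih =>
      obtain ⟨t, htmem, htw⟩ := ih
      by_cases hr0 : v - t = 0
      · refine ⟨t, htmem, ?_⟩
        rw [hr0, (C.w_val.top_iff 0).mpr rfl]
        exact le_top
      obtain ⟨c', hc'⟩ := C.exists_w_int hr0
      have hc'ge : c + (j : ℤ) ≤ c' := by
        have h := htw
        rw [hc'] at h
        exact_mod_cast h
      set r := v - t with hrdef
      set β := C.coeff r c' with hβ
      have hβne : β ≠ 0 := C.lead_ne_zero hc'
      have hE : g * r - r * g' = t * g' - g * t := by
        have h0 : g * r - r * g' = (g * v - v * g') + (t * g' - g * t) := by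
          rw [hrdef]; noncomm_ring
        rw [h0, hrel, sub_self, zero_add]
      have hδ0 : C.coeff (g * r) (m + c') - C.coeff (r * g') (m + c')
          ∈ integralClosure k Lbar := by
        rw [← C.coeff_sub, hE, C.coeff_sub]
        exact sub_mem (C.coeff_mul_mem p e hq hq1 htmem hg' _)
          (C.coeff_mul_mem p e hq hq1 hg htmem _)
      have hlead : C.coeff (g * r) (m + c') = C.coeff g m * qz p e (-m) β :=
        C.coeff_mul_lead p e hq hwg hc'
      have hlead' : C.coeff (r * g') (m + c') = β * qz p e (-c') (C.coeff g' m) := by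
        rw [show m + c' = c' + m from by ring]
        exact C.coeff_mul_lead p e hq hc' hwg'
      rw [hlead, hlead'] at hδ0
      set a := C.coeff g m with hadef
      have ha : a ≠ 0 := C.lead_ne_zero hwg
      set b₁ := qz p e (-c') (C.coeff g' m) with hb₁def
      have hamem : a ∈ integralClosure k Lbar := hg m
      have hb₁mem : b₁ ∈ integralClosure k Lbar := kbar_qz_mem p e hq hq1 _ (hg' m)
      have hβQ : qz p e (-m) β = β ^ q ^ (-m).toNat := by
        have h := qz_coe_nat_apply p e hq (-m).toNat β
        rwa [show (((-m).toNat : ℕ) : ℤ) = -m from by omega] at h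
      have heq : β ^ q ^ (-m).toNat = (a⁻¹ * b₁) * β + a⁻¹ * (a * qz p e (-m) β - β * b₁) := by
        rw [hβQ]
        field_simp
        ring
      have hβmem : β ∈ integralClosure k Lbar := by
        refine kbar_root_mem (Nat.one_lt_pow (by omega) hq1)
          (mul_mem (kbar_inv_mem hamem) hb₁mem)
          (mul_mem (kbar_inv_mem hamem) hδ0) heq
      refine ⟨t + C.cst β * C.τ ^ (-c'), ?_, ?_⟩
      · intro l
        rw [C.coeff_add, C.coeff_monomial]
        refine add_mem (htmem l) ?_
        split_ifs
        · exact hβmem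
        · exact zero_mem _
      · refine (C.w_coeff _ _).mpr (fun l hl => ?_)
        have hl2 : l < c + (j : ℤ) + 1 := by omega
        have hl' : l ≤ c' := by omega
        have hveq : v - (t + C.cst β * C.τ ^ (-c')) = r - C.cst β * C.τ ^ (-c') := by
          rw [hrdef]; abel
        rw [hveq, C.coeff_sub, C.coeff_monomial]
        rcases lt_or_eq_of_le hl' with h|h
        · rw [C.coeff_eq_zero_of_lt_w (by rw [hc']; exact_mod_cast h), if_neg (by omega),
            sub_zero]
        · rw [h, if_pos (by omega), ← hβ, sub_self]
  obtain ⟨t, htmem, htw⟩ := key (i + 1 - c).toNat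
  have hz : C.coeff (v - t) i = 0 := by
    refine C.coeff_eq_zero_of_lt_w (lt_of_lt_of_le ?_ htw)
    exact_mod_cast (by omega : i < c + ((i + 1 - c).toNat : ℤ))
  have h2 : C.coeff v i = C.coeff t i := sub_eq_zero.mp (by rw [← C.coeff_sub, hz])
  rw [h2]
  exact htmem i

end AuxMul


section Main

variable (p e : ℕ) [ExpChar Lbar p] [PerfectRing Lbar p]

/-- Core commutation: if `x` is fixed by `σ` coefficientwise and `u⁻¹·x·u` has
algebraic coefficients, then `x` commutes with `ρ_∞(σ) = σ(u)·τ^d·u⁻¹`. -/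
lemma rho_commutes_core (hp : p.Prime) (hq : q = p ^ e) {u x : R} (hu0 : u ≠ 0)
    {σ : Lbar ≃ₐ[L] Lbar} {d : ℤ} (hσ : C.WeilCond σ d)
    (hx : C.galAct σ x = x)
    (hmem : ∀ i, C.coeff (u⁻¹ * x * u) i ∈ integralClosure k Lbar) :
    x * C.rho σ d u = C.rho σ d u * x := by
  have hA := C.claimA p e hp hq hσ hmem
  have huu : ∀ z : R, u * (u⁻¹ * z) = z := fun z => by
    rw [← mul_assoc, mul_inv_cancel₀ hu0, one_mul]
  have h2 : u * (u⁻¹ * x * u) = x * u := by rw [mul_assoc u⁻¹ x u, huu]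
  have h1 : x * C.galAct σ u = C.galAct σ u * C.galAct σ (u⁻¹ * x * u) := by
    calc x * C.galAct σ u = C.galAct σ (x * u) := by rw [map_mul, hx]
      _ = C.galAct σ (u * (u⁻¹ * x * u)) := by rw [h2]
      _ = C.galAct σ u * C.galAct σ (u⁻¹ * x * u) := map_mul _ _ _
  rw [rho]
  calc x * (C.galAct σ u * C.τ ^ d * u⁻¹)
      = x * C.galAct σ u * C.τ ^ d * u⁻¹ := by simp only [mul_assoc]
    _ = C.galAct σ u * C.galAct σ (u⁻¹ * x * u) * C.τ ^ d * u⁻¹ := by rw [h1]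
    _ = C.galAct σ u * (C.galAct σ (u⁻¹ * x * u) * C.τ ^ d) * u⁻¹ := by
        simp only [mul_assoc]
    _ = C.galAct σ u * (C.τ ^ d * (u⁻¹ * x * u)) * u⁻¹ := by rw [hA]
    _ = C.galAct σ u * C.τ ^ d * u⁻¹ * x := by
        simp only [mul_assoc, mul_inv_cancel₀ hu0, mul_one]

end Main


set_option maxHeartbeats 1000000 in
/-- **Lemma 2.2(iii)–(vi): basic properties of the Sato–Tate representation `ρ_∞`.**
Let `φ : A → L[τ]` be a Drinfeld module of rank `n`, and fix `u ∈ L̄((τ⁻¹))^×` with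
`u⁻¹ · φ(F_∞) · u ⊆ k̄((τ⁻¹))`.  Then:
(i) for every `σ ∈ W_L` (with degree `deg σ = d`) the series
`σ(u)·τ^{deg σ}·u⁻¹` belongs to `D_φ^×` and does not depend on the choice of `u`;
(ii) `ord_{τ⁻¹}(ρ_∞ σ) = −deg σ`;
(iii) `ρ_∞ : W_L → D_φ^×` is a continuous group homomorphism;
(iv) `ρ_∞(W_L)` commutes with `End_L(φ)`. -/
theorem rho_infty_basic_properties :
    -- (i) membership in `D_φ^×` and independence of the choice of `u`
    (∀ (σ : Lbar ≃ₐ[L] Lbar) (d : ℤ) (u u' : R), C.WeilCond σ d →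
      C.UGoodInf u → C.UGoodInf u' →
      C.rho σ d u ∈ C.D ∧ C.rho σ d u ≠ 0 ∧ C.rho σ d u = C.rho σ d u') ∧
    -- (ii) `ord_{τ⁻¹}(ρ_∞ σ) = −deg σ`
    (∀ (σ : Lbar ≃ₐ[L] Lbar) (d : ℤ) (u : R), C.WeilCond σ d → C.UGoodInf u →
      C.w (C.rho σ d u) = ((-d : ℤ) : WithTop ℤ)) ∧
    -- (iii) `ρ_∞` is a group homomorphism ...
    (∀ (σ₁ σ₂ : Lbar ≃ₐ[L] Lbar) (d₁ d₂ : ℤ) (u : R), C.WeilCond σ₁ d₁ →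
      C.WeilCond σ₂ d₂ → C.UGoodInf u →
      C.rho (σ₁ * σ₂) (d₁ + d₂) u = C.rho σ₁ d₁ u * C.rho σ₂ d₂ u) ∧
    -- ... which is continuous: on the degree-zero part of `W_L` (i.e. `Gal(L^sep/L·k̄)`,
    -- carrying the Krull topology) the map `σ ↦ ρ_∞ σ` is continuous at the identity
    (∀ (m : ℤ) (u : R), C.UGoodInf u → ∃ s : Finset Lbar,
      ∀ σ : Lbar ≃ₐ[L] Lbar, C.WeilCond σ 0 → (∀ x ∈ s, σ x = x) →
        (m : WithTop ℤ) ≤ C.w (C.rho σ 0 u - 1)) ∧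
    -- (iv) the image of `ρ_∞` commutes with `End_L(φ)`
    (∀ (σ : Lbar ≃ₐ[L] Lbar) (d : ℤ) (u : R), C.WeilCond σ d → C.UGoodInf u →
      ∀ f ∈ C.EndL, C.rho σ d u * f = f * C.rho σ d u) := by
  -- characteristic setup
  haveI : IsAlgClosed Lbar := C.algClosure.isAlgClosed
  set p : ℕ := ringChar k with hpdef
  haveI hCk : CharP k p := ringChar.charP k
  have hp : p.Prime := CharP.char_is_prime k p
  haveI : Fact p.Prime := ⟨hp⟩
  obtain ⟨en, -, hcard⟩ := FiniteField.card k p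
  set e : ℕ := (en : ℕ) with hedef
  have hq : q = p ^ e := by rw [← C.card_k]; exact hcard
  have hq1 : 1 < q := C.one_lt_q
  haveI : CharP Lbar p := charP_of_injective_algebraMap (algebraMap k Lbar).injective p
  -- a nonconstant element of `A`
  obtain ⟨a₀, i₀, hi₀ne, hi₀⟩ := C.φ_nonconst
  have hφa₀ : C.φ a₀ ≠ 0 := fun h => hi₀ (by rw [h, C.coeff_zero'])
  obtain ⟨m, hm⟩ := C.exists_w_int hφa₀
  have hmneg : m < 0 := by
    have hi₀neg : i₀ < 0 := by
      rcases lt_or_gt_of_ne hi₀ne with h|h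
      · exact h
      · exact absurd (C.φ_poly a₀ i₀ h) hi₀
    have h1 := C.w_le_of_coeff_ne hi₀
    rw [hm] at h1
    have h2 := WithTop.coe_le_coe.mp h1
    omega
  -- basic facts about `ψ = u⁻¹ φ(a₀) u`
  have psimem : ∀ u : R, C.UGoodInf u → ∀ (a : ↥C.A) (i : ℤ),
      C.coeff (u⁻¹ * C.φ a * u) i ∈ integralClosure k Lbar := by
    intro u hu a i
    rw [mem_kbar_iff]
    have h := hu.2 (algebraMap F Finf (a : F)) i
    rwa [C.phiinf_extends] at h
  have wpsi : ∀ u : R, u ≠ 0 → C.w (u⁻¹ * C.φ a₀ * u) = (m : WithTop ℤ) := by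
    intro u hu
    obtain ⟨cu, hcu⟩ := C.exists_w_int hu
    have h1 : C.w (u⁻¹ * C.φ a₀) = ((-cu + m : ℤ) : WithTop ℤ) :=
      C.w_mul_coe (C.w_inv_coe hcu) hm
    have h2 := C.w_mul_coe h1 hcu
    rw [h2, show -cu + m + cu = m from by omega]
  -- part (i), membership and nonvanishing
  have hmemD : ∀ (σ : Lbar ≃ₐ[L] Lbar) (d : ℤ) (u : R), C.WeilCond σ d → C.UGoodInf u →
      C.rho σ d u ∈ C.D ∧ C.rho σ d u ≠ 0 := by
    intro σ d u hσ hu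
    have hu0 : u ≠ 0 := hu.1
    constructor
    · refine Subring.mem_centralizer_iff.mpr ?_
      rintro g ⟨a, rfl⟩
      exact C.rho_commutes_core p e hp hq hu0 hσ
        (C.galAct_fixL σ (C.φ_coeff_L a)) (psimem u hu a)
    · exact mul_ne_zero (mul_ne_zero (C.galAct_ne_zero σ hu0)
        (zpow_ne_zero d C.tau_ne_zero)) (inv_ne_zero hu0)
  -- part (i), independence of u
  have hindep : ∀ (σ : Lbar ≃ₐ[L] Lbar) (d : ℤ) (u u' : R), C.WeilCond σ d →
      C.UGoodInf u → C.UGoodInf u' → C.rho σ d u = C.rho σ d u' := by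
    intro σ d u u' hσ hu hu'
    have hu0 : u ≠ 0 := hu.1
    have hu'0 : u' ≠ 0 := hu'.1
    have huu : ∀ z : R, u * (u⁻¹ * z) = z := fun z => by
      rw [← mul_assoc, mul_inv_cancel₀ hu0, one_mul]
    have hu'u' : ∀ z : R, u' * (u'⁻¹ * z) = z := fun z => by
      rw [← mul_assoc, mul_inv_cancel₀ hu'0, one_mul]
    have hrel : (u⁻¹ * C.φ a₀ * u) * (u⁻¹ * u') = (u⁻¹ * u') * (u'⁻¹ * C.φ a₀ * u') := by
      simp only [mul_assoc, huu, hu'u']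
    have hvmem : ∀ i, C.coeff (u⁻¹ * u') i ∈ integralClosure k Lbar :=
      C.conj_mem p e hp hq hq1 hmneg (wpsi u hu0) (wpsi u' hu'0)
        (psimem u hu a₀) (psimem u' hu' a₀)
        (mul_ne_zero (inv_ne_zero hu0) hu'0) hrel
    have hA := C.claimA p e hp hq hσ hvmem
    have huv : u' = u * (u⁻¹ * u') := (huu u').symm
    have hgal := congrArg (C.galAct σ) huv
    rw [map_mul] at hgal
    symm
    calc C.rho σ d u'
        = C.galAct σ u * C.galAct σ (u⁻¹ * u') * C.τ ^ d * u'⁻¹ := by rw [rho, hgal]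
      _ = C.galAct σ u * (C.galAct σ (u⁻¹ * u') * C.τ ^ d) * u'⁻¹ := by
          simp only [mul_assoc]
      _ = C.galAct σ u * (C.τ ^ d * (u⁻¹ * u')) * u'⁻¹ := by rw [hA]
      _ = C.galAct σ u * C.τ ^ d * u⁻¹ := by
          simp only [mul_assoc, mul_inv_cancel₀ hu'0, mul_one]
      _ = C.rho σ d u := by rw [rho]
  refine ⟨?_, ?_, ?_, ?_, ?_⟩
  -- (i)
  · intro σ d u u' hσ hu hu'
    exact ⟨(hmemD σ d u hσ hu).1, (hmemD σ d u hσ hu).2, hindep σ d u u' hσ hu hu'⟩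
  -- (ii)
  · intro σ d u hσ hu
    obtain ⟨cu, hcu⟩ := C.exists_w_int hu.1
    have h1 : C.w (C.galAct σ u) = (cu : WithTop ℤ) := by rw [C.w_galAct, hcu]
    have h2 := C.w_mul_coe (C.w_mul_coe h1 (C.w_tau_zpow d)) (C.w_inv_coe hcu)
    rw [rho, h2, show cu + -d + -cu = -d from by omega]
  -- (iii), homomorphism property
  · intro σ₁ σ₂ d₁ d₂ u hσ₁ hσ₂ hu
    have hu0 : u ≠ 0 := hu.1
    have huu : ∀ z : R, u * (u⁻¹ * z) = z := fun z => by
      rw [← mul_assoc, mul_inv_cancel₀ hu0, one_mul]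
    have huui : ∀ z : R, u⁻¹ * (u * z) = z := fun z => by
      rw [← mul_assoc, inv_mul_cancel₀ hu0, one_mul]
    set h : R := u⁻¹ * C.galAct σ₂ u with hhdef
    have hσ₂u0 : C.galAct σ₂ u ≠ 0 := C.galAct_ne_zero σ₂ hu0
    have hvv : ∀ z : R, C.galAct σ₂ u * ((C.galAct σ₂ u)⁻¹ * z) = z := fun z => by
      rw [← mul_assoc, mul_inv_cancel₀ hσ₂u0, one_mul]
    have hhne : h ≠ 0 := mul_ne_zero (inv_ne_zero hu0) hσ₂u0
    have hgalψ : C.galAct σ₂ (u⁻¹ * C.φ a₀ * u)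
        = (C.galAct σ₂ u)⁻¹ * C.φ a₀ * C.galAct σ₂ u := by
      rw [map_mul, map_mul, map_inv₀, C.galAct_fixL σ₂ (C.φ_coeff_L a₀)]
    have hrel : (u⁻¹ * C.φ a₀ * u) * h = h * C.galAct σ₂ (u⁻¹ * C.φ a₀ * u) := by
      rw [hgalψ, hhdef]
      simp only [mul_assoc, huu, hvv]
    have hhmem : ∀ i, C.coeff h i ∈ integralClosure k Lbar :=
      C.conj_mem p e hp hq hq1 hmneg (wpsi u hu0)
        (by rw [C.w_galAct]; exact wpsi u hu0)
        (psimem u hu a₀) (C.galAct_mem_kbar σ₂ (psimem u hu a₀)) hhne hrel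
    have hA := C.claimA p e hp hq hσ₁ hhmem
    have hUH : C.galAct σ₂ u = u * h := (huu _).symm
    calc C.rho (σ₁ * σ₂) (d₁ + d₂) u
        = C.galAct σ₁ u * (C.galAct σ₁ h * C.τ ^ d₁) * (C.τ ^ d₂ * u⁻¹) := by
          rw [rho, C.galAct_comp, hUH, map_mul, zpow_add₀ C.tau_ne_zero]
          simp only [mul_assoc]
      _ = C.galAct σ₁ u * (C.τ ^ d₁ * h) * (C.τ ^ d₂ * u⁻¹) := by rw [hA]
      _ = C.rho σ₁ d₁ u * C.rho σ₂ d₂ u := by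
          rw [rho, rho, hUH]
          simp only [mul_assoc, huui]
  -- (iii), continuity
  · intro m u hu
    obtain ⟨cu, hcu⟩ := C.exists_w_int hu.1
    refine ⟨(Finset.Icc cu (m + cu)).image (C.coeff u), ?_⟩
    intro σ hσ hfix
    have hδ : C.rho σ 0 u - 1 = (C.galAct σ u - u) * u⁻¹ := by
      rw [rho, zpow_zero, mul_one, sub_mul, mul_inv_cancel₀ hu.1]
    have hwd : ((m + cu : ℤ) : WithTop ℤ) ≤ C.w (C.galAct σ u - u) := by
      refine (C.w_coeff _ _).mpr (fun j hj => ?_)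
      rw [C.coeff_sub, C.galAct_coeff]
      rcases lt_or_ge j cu with hcase|hcase
      · rw [C.coeff_eq_zero_of_lt_w (by rw [hcu]; exact_mod_cast hcase), map_zero, sub_zero]
      · rw [hfix _ (Finset.mem_image_of_mem _ (Finset.mem_Icc.mpr ⟨hcase, by omega⟩)),
          sub_self]
    rw [hδ]
    by_cases h0 : C.galAct σ u - u = 0
    · rw [h0, zero_mul, (C.w_val.top_iff 0).mpr rfl]
      exact le_top
    obtain ⟨cd, hcd⟩ := C.exists_w_int h0
    rw [C.w_mul_coe hcd (C.w_inv_coe hcu)]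
    have h3 : m + cu ≤ cd := by
      rw [hcd] at hwd
      exact_mod_cast hwd
    exact_mod_cast (by omega : m ≤ cd + -cu)
  -- (iv)
  · intro σ d u hσ hu f hf
    by_cases hf0 : f = 0
    · rw [hf0, mul_zero, zero_mul]
    have hu0 : u ≠ 0 := hu.1
    have huu : ∀ z : R, u * (u⁻¹ * z) = z := fun z => by
      rw [← mul_assoc, mul_inv_cancel₀ hu0, one_mul]
    have hrel : (u⁻¹ * C.φ a₀ * u) * (u⁻¹ * f * u) = (u⁻¹ * f * u) * (u⁻¹ * C.φ a₀ * u) := by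
      simp only [mul_assoc, huu]
      congr 1
      rw [← mul_assoc, ← mul_assoc, hf.2 a₀]
    have heene : (u⁻¹ * f * u) ≠ 0 := mul_ne_zero (mul_ne_zero (inv_ne_zero hu0) hf0) hu0
    have heemem : ∀ i, C.coeff (u⁻¹ * f * u) i ∈ integralClosure k Lbar :=
      C.conj_mem p e hp hq hq1 hmneg (wpsi u hu0) (wpsi u hu0)
        (psimem u hu a₀) (psimem u hu a₀) heene hrel
    exact (C.rho_commutes_core p e hp hq hu0 hσ
      (C.galAct_fixL σ (fun i => hf.1.2 i)) heemem).symm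

end Ctx

end SatoTate
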